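/- Let ω, ω̂, u ∈ ℝ, M, M̂ > 0, η, η̂ ∈ (0,1]. Consider on ℝ⁶ with coordinates q = (x,y,z,x̂,ŷ,ẑ) the drift vector field b = (−ωy − (M/2)x + uz, ωx − (M/2)y, −ux, −ω̂ŷ − (M̂/2)x̂ + uẑ + x̂ẑE(z,ẑ), ω̂x̂ − (M̂/2)ŷ + ŷẑE(z,ẑ), −ux̂ − (1−ẑ²)E(z,ẑ)) and the diffusion vector field g = (−√(ηM)xz, −√(ηM)yz, √(ηM)(1−z²), −√(η̂M̂)x̂ẑ, −√(η̂M̂)ŷẑ, √(η̂M̂)(1−ẑ²)). Then for V(q) = √(1−z) + √(1−ẑ) and every q with z ∈ (−1,1) and ẑ ∈ (−1,1), the infinitesimal generator satisfies ℒV(q) = u·U₁(q) + U₂(q), where U₁(q) := (1/2)(x(1−z)^{−1/2} + x̂(1−ẑ)^{−1/2}) and U₂(q) := −(1/8)[ηM(1+z)²√(1−z) + η̂M̂(1+ẑ)²√(1−ẑ)] + (1/2)(1+ẑ)E(z,ẑ)√(1−ẑ). -/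

import Mathlib

/-- E(z,ẑ) := √(η̂M̂)(√(η̂M̂)·ẑ − √(ηM)·z). -/
noncomputable def Efun (η η' M M' z z' : ℝ) : ℝ :=
  Real.sqrt (η' * M') * (Real.sqrt (η' * M') * z' - Real.sqrt (η * M) * z)

/-- Bloch-coordinate drift vector field of the coupled stochastic master equations,
with coordinates q = (x, y, z, x̂, ŷ, ẑ). -/
noncomputable def bdrift (ω ω' u M M' η η' : ℝ) (q : Fin 6 → ℝ) : Fin 6 → ℝ :=
  ![-ω * q 1 - M / 2 * q 0 + u * q 2,
    ω * q 0 - M / 2 * q 1,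
    -u * q 0,
    -ω' * q 4 - M' / 2 * q 3 + u * q 5 + q 3 * q 5 * Efun η η' M M' (q 2) (q 5),
    ω' * q 3 - M' / 2 * q 4 + q 4 * q 5 * Efun η η' M M' (q 2) (q 5),
    -u * q 3 - (1 - (q 5) ^ 2) * Efun η η' M M' (q 2) (q 5)]

/-- Bloch-coordinate diffusion vector field of the coupled stochastic master equations. -/
noncomputable def gdiff (M M' η η' : ℝ) (q : Fin 6 → ℝ) : Fin 6 → ℝ :=
  ![-Real.sqrt (η * M) * q 0 * q 2,
    -Real.sqrt (η * M) * q 1 * q 2,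
    Real.sqrt (η * M) * (1 - (q 2) ^ 2),
    -Real.sqrt (η' * M') * q 3 * q 5,
    -Real.sqrt (η' * M') * q 4 * q 5,
    Real.sqrt (η' * M') * (1 - (q 5) ^ 2)]

/-- The infinitesimal generator ℒf(q) = Σᵢ bᵢ(q)∂f/∂qᵢ + (1/2)Σᵢⱼ gᵢ(q)gⱼ(q)∂²f/∂qᵢ∂qⱼ
of a diffusion with drift `b` and a single diffusion vector field `g`. -/
noncomputable def generator (b g : (Fin 6 → ℝ) → Fin 6 → ℝ)
    (f : (Fin 6 → ℝ) → ℝ) (q : Fin 6 → ℝ) : ℝ :=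
  (∑ i, b q i * fderiv ℝ f q (Pi.single i 1)) +
    (1/2) * ∑ i, ∑ j, g q i * g q j *
      fderiv ℝ (fun p => fderiv ℝ f p (Pi.single i 1)) q (Pi.single j 1)

/-- U₁(q) := (1/2)(x(1−z)^{−1/2} + x̂(1−ẑ)^{−1/2}). -/
noncomputable def U1 (q : Fin 6 → ℝ) : ℝ :=
  (1/2) * (q 0 * (1 - q 2) ^ (-(1/2) : ℝ) + q 3 * (1 - q 5) ^ (-(1/2) : ℝ))

/-- U₂(q) := −(1/8)[ηM(1+z)²√(1−z) + η̂M̂(1+ẑ)²√(1−ẑ)] + (1/2)(1+ẑ)E(z,ẑ)√(1−ẑ). -/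
noncomputable def U2 (η η' M M' : ℝ) (q : Fin 6 → ℝ) : ℝ :=
  -(1/8) * (η * M * (1 + q 2) ^ 2 * Real.sqrt (1 - q 2)
      + η' * M' * (1 + q 5) ^ 2 * Real.sqrt (1 - q 5))
    + (1/2) * (1 + q 5) * Efun η η' M M' (q 2) (q 5) * Real.sqrt (1 - q 5)


section Aux

open Real Filter

private lemma hasFDerivAt_sqrtCoord (i : Fin 6) (p : Fin 6 → ℝ) (hp : 0 < 1 - p i) :
    HasFDerivAt (fun x : Fin 6 → ℝ => Real.sqrt (1 - x i))
      ((1 / (2 * Real.sqrt (1 - p i))) •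
        (-(ContinuousLinearMap.proj i : (Fin 6 → ℝ) →L[ℝ] ℝ))) p := by
  have hg : HasFDerivAt (fun x : Fin 6 → ℝ => 1 - x i)
      (-(ContinuousLinearMap.proj i : (Fin 6 → ℝ) →L[ℝ] ℝ)) p := by
    exact ((hasFDerivAt_const (1 : ℝ) p).sub
      (ContinuousLinearMap.proj i : (Fin 6 → ℝ) →L[ℝ] ℝ).hasFDerivAt).congr_fderiv (zero_sub _)
  exact hg.sqrt hp.ne'

private lemma hasFDerivAt_V (p : Fin 6 → ℝ) (h2 : 0 < 1 - p 2) (h5 : 0 < 1 - p 5) :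
    HasFDerivAt (fun p : Fin 6 → ℝ => Real.sqrt (1 - p 2) + Real.sqrt (1 - p 5))
      ((1 / (2 * Real.sqrt (1 - p 2))) •
          (-(ContinuousLinearMap.proj 2 : (Fin 6 → ℝ) →L[ℝ] ℝ)) +
        (1 / (2 * Real.sqrt (1 - p 5))) •
          (-(ContinuousLinearMap.proj 5 : (Fin 6 → ℝ) →L[ℝ] ℝ))) p :=
  (hasFDerivAt_sqrtCoord 2 p h2).add (hasFDerivAt_sqrtCoord 5 p h5)

private lemma memU (q : Fin 6 → ℝ) (h2 : 0 < 1 - q 2) (h5 : 0 < 1 - q 5) :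
    {p : Fin 6 → ℝ | 0 < 1 - p 2 ∧ 0 < 1 - p 5} ∈ nhds q := by
  have ho : IsOpen {p : Fin 6 → ℝ | 0 < 1 - p 2 ∧ 0 < 1 - p 5} := by
    have h1 : IsOpen {p : Fin 6 → ℝ | 0 < 1 - p 2} :=
      isOpen_lt continuous_const (continuous_const.sub (continuous_apply 2))
    have h2 : IsOpen {p : Fin 6 → ℝ | 0 < 1 - p 5} :=
      isOpen_lt continuous_const (continuous_const.sub (continuous_apply 5))
    exact h1.inter h2
  exact ho.mem_nhds ⟨h2, h5⟩

end Aux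

set_option maxHeartbeats 2000000 in
theorem generator_of_lyapunov_function (ω ω' u M M' η η' : ℝ)
    (hM : 0 < M) (hM' : 0 < M')
    (hη : η ∈ Set.Ioc (0 : ℝ) 1) (hη' : η' ∈ Set.Ioc (0 : ℝ) 1)
    (q : Fin 6 → ℝ) (hz : q 2 ∈ Set.Ioo (-1 : ℝ) 1) (hz' : q 5 ∈ Set.Ioo (-1 : ℝ) 1) :
    generator (bdrift ω ω' u M M' η η') (gdiff M M' η η')
        (fun p => Real.sqrt (1 - p 2) + Real.sqrt (1 - p 5)) q
      = u * U1 q + U2 η η' M M' q := by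
  classical
  obtain ⟨hz1, hz2⟩ := hz
  obtain ⟨hz'1, hz'2⟩ := hz'
  have h2 : 0 < 1 - q 2 := by linarith
  have h5 : 0 < 1 - q 5 := by linarith
  set f : (Fin 6 → ℝ) → ℝ := fun p => Real.sqrt (1 - p 2) + Real.sqrt (1 - p 5) with hf
  set s := Real.sqrt (1 - q 2) with hs
  set t := Real.sqrt (1 - q 5) with ht
  have hs0 : 0 < s := Real.sqrt_pos.mpr h2
  have ht0 : 0 < t := Real.sqrt_pos.mpr h5
  have hU := memU q h2 h5
  -- pointwise first derivative on U
  have hfd : ∀ p, 0 < 1 - p 2 → 0 < 1 - p 5 → ∀ v : Fin 6 → ℝ,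
      fderiv ℝ f p v = -(1 / (2 * Real.sqrt (1 - p 2))) * v 2
        + -(1 / (2 * Real.sqrt (1 - p 5))) * v 5 := by
    intro p hp2 hp5 v
    rw [(hasFDerivAt_V p hp2 hp5).fderiv]
    simp only [ContinuousLinearMap.add_apply, ContinuousLinearMap.smul_apply,
      ContinuousLinearMap.neg_apply, ContinuousLinearMap.proj_apply, smul_eq_mul]
    ring
  -- first derivatives at q in coordinate directions
  have e1 : ∀ i : Fin 6, fderiv ℝ f q (Pi.single i 1)
      = -(1 / (2 * s)) * ((Pi.single i 1 : Fin 6 → ℝ) 2) + -(1 / (2 * t)) * ((Pi.single i 1 : Fin 6 → ℝ) 5) := by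
    intro i
    simp only [hs, ht]
    exact hfd q h2 h5 _
  -- second derivatives: directions other than 2, 5 give zero
  have w0 : ∀ i : Fin 6, (Pi.single i 1 : Fin 6 → ℝ) 2 = 0 → (Pi.single i 1 : Fin 6 → ℝ) 5 = 0 →
      ∀ j : Fin 6, fderiv ℝ (fun p => fderiv ℝ f p (Pi.single i 1)) q (Pi.single j 1) = 0 := by
    intro i hi2 hi5 j
    have hev : (fun p => fderiv ℝ f p (Pi.single i 1)) =ᶠ[nhds q] (fun _ => (0:ℝ)) := by
      filter_upwards [hU] with p hp
      rw [hfd p hp.1 hp.2, hi2, hi5]; ring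
    rw [hev.fderiv_eq, fderiv_fun_const]
    simp
  -- second derivative for direction 2
  have w2 : ∀ j : Fin 6, fderiv ℝ (fun p => fderiv ℝ f p (Pi.single 2 1)) q (Pi.single j 1)
      = -(1 / (4 * s ^ 3)) * ((Pi.single j 1 : Fin 6 → ℝ) 2) := by
    intro j
    have hev : (fun p => fderiv ℝ f p (Pi.single 2 1)) =ᶠ[nhds q]
        (fun p => (-(1/2) : ℝ) * (Real.sqrt (1 - p 2))⁻¹) := by
      filter_upwards [hU] with p hp
      rw [hfd p hp.1 hp.2]
      simp [Pi.single_apply]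
      ring
    have hder : HasFDerivAt (fun p : Fin 6 → ℝ => (-(1/2) : ℝ) * (Real.sqrt (1 - p 2))⁻¹)
        ((-(1/2) : ℝ) • ((-(s ^ 2)⁻¹ : ℝ) • ((1 / (2 * s)) •
          (-(ContinuousLinearMap.proj 2 : (Fin 6 → ℝ) →L[ℝ] ℝ))))) q := by
      have hinv : HasFDerivAt (fun p : Fin 6 → ℝ => (Real.sqrt (1 - p 2))⁻¹)
          ((-(s ^ 2)⁻¹ : ℝ) • ((1 / (2 * s)) •
            (-(ContinuousLinearMap.proj 2 : (Fin 6 → ℝ) →L[ℝ] ℝ)))) q := by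
        have := (hasDerivAt_inv hs0.ne').comp_hasFDerivAt q (hasFDerivAt_sqrtCoord 2 q h2)
        simp [hs] at this ⊢; exact this
      exact hinv.const_mul _
    rw [hev.fderiv_eq, hder.fderiv]
    simp only [ContinuousLinearMap.smul_apply, ContinuousLinearMap.neg_apply,
      ContinuousLinearMap.proj_apply, smul_eq_mul]
    ring
  have w5 : ∀ j : Fin 6, fderiv ℝ (fun p => fderiv ℝ f p (Pi.single 5 1)) q (Pi.single j 1)
      = -(1 / (4 * t ^ 3)) * ((Pi.single j 1 : Fin 6 → ℝ) 5) := by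
    intro j
    have hev : (fun p => fderiv ℝ f p (Pi.single 5 1)) =ᶠ[nhds q]
        (fun p => (-(1/2) : ℝ) * (Real.sqrt (1 - p 5))⁻¹) := by
      filter_upwards [hU] with p hp
      rw [hfd p hp.1 hp.2]
      simp [Pi.single_apply]
      ring
    have hder : HasFDerivAt (fun p : Fin 6 → ℝ => (-(1/2) : ℝ) * (Real.sqrt (1 - p 5))⁻¹)
        ((-(1/2) : ℝ) • ((-(t ^ 2)⁻¹ : ℝ) • ((1 / (2 * t)) •
          (-(ContinuousLinearMap.proj 5 : (Fin 6 → ℝ) →L[ℝ] ℝ))))) q := by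
      have hinv : HasFDerivAt (fun p : Fin 6 → ℝ => (Real.sqrt (1 - p 5))⁻¹)
          ((-(t ^ 2)⁻¹ : ℝ) • ((1 / (2 * t)) •
            (-(ContinuousLinearMap.proj 5 : (Fin 6 → ℝ) →L[ℝ] ℝ)))) q := by
        have := (hasDerivAt_inv ht0.ne').comp_hasFDerivAt q (hasFDerivAt_sqrtCoord 5 q h5)
        simp [ht] at this ⊢; exact this
      exact hinv.const_mul _
    rw [hev.fderiv_eq, hder.fderiv]
    simp only [ContinuousLinearMap.smul_apply, ContinuousLinearMap.neg_apply,
      ContinuousLinearMap.proj_apply, smul_eq_mul]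
    ring
  have hs2 : s ^ 2 = 1 - q 2 := Real.sq_sqrt h2.le
  have ht2 : t ^ 2 = 1 - q 5 := Real.sq_sqrt h5.le
  set a := Real.sqrt (η * M) with ha
  set a' := Real.sqrt (η' * M') with ha'
  have hηM : a ^ 2 = η * M := Real.sq_sqrt (mul_nonneg hη.1.le hM.le)
  have hηM' : a' ^ 2 = η' * M' := Real.sq_sqrt (mul_nonneg hη'.1.le hM'.le)
  have hrpow2 : (1 - q 2) ^ (-(1/2) : ℝ) = s⁻¹ := by
    rw [Real.rpow_neg h2.le, ← Real.sqrt_eq_rpow, hs]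
  have hrpow5 : (1 - q 5) ^ (-(1/2) : ℝ) = t⁻¹ := by
    rw [Real.rpow_neg h5.le, ← Real.sqrt_eq_rpow, ht]
  have p02 : (Pi.single (0:Fin 6) (1:ℝ) : Fin 6 → ℝ) 2 = 0 := by simp [Pi.single_apply]
  have p05 : (Pi.single (0:Fin 6) (1:ℝ) : Fin 6 → ℝ) 5 = 0 := by simp [Pi.single_apply]
  have p12 : (Pi.single (1:Fin 6) (1:ℝ) : Fin 6 → ℝ) 2 = 0 := by simp [Pi.single_apply]
  have p15 : (Pi.single (1:Fin 6) (1:ℝ) : Fin 6 → ℝ) 5 = 0 := by simp [Pi.single_apply]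
  have p32 : (Pi.single (3:Fin 6) (1:ℝ) : Fin 6 → ℝ) 2 = 0 := by simp [Pi.single_apply]
  have p35 : (Pi.single (3:Fin 6) (1:ℝ) : Fin 6 → ℝ) 5 = 0 := by simp [Pi.single_apply]
  have p42 : (Pi.single (4:Fin 6) (1:ℝ) : Fin 6 → ℝ) 2 = 0 := by simp [Pi.single_apply]
  have p45 : (Pi.single (4:Fin 6) (1:ℝ) : Fin 6 → ℝ) 5 = 0 := by simp [Pi.single_apply]
  have p22 : (Pi.single (2:Fin 6) (1:ℝ) : Fin 6 → ℝ) 2 = 1 := by simp [Pi.single_apply]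
  have p25 : (Pi.single (2:Fin 6) (1:ℝ) : Fin 6 → ℝ) 5 = 0 := by simp [Pi.single_apply]
  have p52 : (Pi.single (5:Fin 6) (1:ℝ) : Fin 6 → ℝ) 2 = 0 := by simp [Pi.single_apply]
  have p55 : (Pi.single (5:Fin 6) (1:ℝ) : Fin 6 → ℝ) 5 = 1 := by simp [Pi.single_apply]
  have b0 : bdrift ω ω' u M M' η η' q 0 = -ω * q 1 - M / 2 * q 0 + u * q 2 := rfl
  have b1 : bdrift ω ω' u M M' η η' q 1 = ω * q 0 - M / 2 * q 1 := rfl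
  have b2 : bdrift ω ω' u M M' η η' q 2 = -u * q 0 := rfl
  have b3 : bdrift ω ω' u M M' η η' q 3
      = -ω' * q 4 - M' / 2 * q 3 + u * q 5 + q 3 * q 5 * Efun η η' M M' (q 2) (q 5) := rfl
  have b4 : bdrift ω ω' u M M' η η' q 4
      = ω' * q 3 - M' / 2 * q 4 + q 4 * q 5 * Efun η η' M M' (q 2) (q 5) := rfl
  have b5 : bdrift ω ω' u M M' η η' q 5
      = -u * q 3 - (1 - (q 5) ^ 2) * Efun η η' M M' (q 2) (q 5) := rfl
  have g0 : gdiff M M' η η' q 0 = -a * q 0 * q 2 := rfl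
  have g1 : gdiff M M' η η' q 1 = -a * q 1 * q 2 := rfl
  have g2 : gdiff M M' η η' q 2 = a * (1 - (q 2) ^ 2) := rfl
  have g3 : gdiff M M' η η' q 3 = -a' * q 3 * q 5 := rfl
  have g4 : gdiff M M' η η' q 4 = -a' * q 4 * q 5 := rfl
  have g5 : gdiff M M' η η' q 5 = a' * (1 - (q 5) ^ 2) := rfl
  rw [generator]
  simp only [Fin.sum_univ_six]
  rw [e1 0, e1 1, e1 2, e1 3, e1 4, e1 5,
    w0 0 p02 p05 0, w0 0 p02 p05 1, w0 0 p02 p05 2, w0 0 p02 p05 3, w0 0 p02 p05 4, w0 0 p02 p05 5,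
    w0 1 p12 p15 0, w0 1 p12 p15 1, w0 1 p12 p15 2, w0 1 p12 p15 3, w0 1 p12 p15 4, w0 1 p12 p15 5,
    w0 3 p32 p35 0, w0 3 p32 p35 1, w0 3 p32 p35 2, w0 3 p32 p35 3, w0 3 p32 p35 4, w0 3 p32 p35 5,
    w0 4 p42 p45 0, w0 4 p42 p45 1, w0 4 p42 p45 2, w0 4 p42 p45 3, w0 4 p42 p45 4, w0 4 p42 p45 5,
    w2 0, w2 1, w2 2, w2 3, w2 4, w2 5, w5 0, w5 1, w5 2, w5 3, w5 4, w5 5]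
  simp only [p02, p05, p12, p15, p22, p25, p32, p35, p42, p45, p52, p55]
  rw [b0, b1, b2, b3, b4, b5, g0, g1, g2, g3, g4, g5, U1, U2]
  rw [hrpow2, hrpow5]
  set E := Efun η η' M M' (q 2) (q 5) with hE
  have hq2 : q 2 = 1 - s ^ 2 := by linarith [hs2]
  have hq5 : q 5 = 1 - t ^ 2 := by linarith [ht2]
  rw [hq2, hq5, ← hηM, ← hηM']
  field_simp
  simp only [sub_sub_cancel, Real.sqrt_sq hs0.le, Real.sqrt_sq ht0.le]
  ring
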